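/- Let q be a polynomial with a repelling fixed point z_0 in the open unit disk, i.e., q(z_0) = z_0 and |q'(z_0)| > 1. Then for every ε > 0 there is N such that for all n ≥ N, f_n(z) = z^n + q(z) has a fixed point z_n with |z_n − z_0| < ε and |f_n'(z_n)| > 1. -/

import Mathlib

open Polynomial Metric Filter

/-- if `q` has a repelling fixed point `z₀` in the open unit disk,
then for every `ε > 0` and all large `n`, `f_n(z) = z^n + q(z)` has a fixed point
`z_n` within `ε` of `z₀` with `|f_n'(z_n)| > 1`. -/
theorem repelling_fixed_point_persists (q : Polynomial ℂ) (z₀ : ℂ)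
    (hfix : q.eval z₀ = z₀) (hz₀ : ‖z₀‖ < 1)
    (hrep : 1 < ‖q.derivative.eval z₀‖) :
    ∀ ε > (0 : ℝ), ∃ N : ℕ, ∀ n ≥ N, ∃ zn : ℂ,
      zn ^ n + q.eval zn = zn ∧ ‖zn - z₀‖ < ε ∧
      1 < ‖(n : ℂ) * zn ^ (n - 1) + q.derivative.eval zn‖ := by
  intro ε hε
  set L : ℝ := ‖q.derivative.eval z₀‖ with hL_def
  set a : ℂ := q.derivative.eval z₀ - 1 with ha_def
  have hL : 1 < L := hrep
  have ha : a ≠ 0 := by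
    intro h
    have h1 : q.derivative.eval z₀ = 1 := by
      have := sub_eq_zero.mp h; simpa using this
    rw [hL_def, h1] at hL; simp at hL
  have hanorm : 0 < ‖a‖ := norm_pos_iff.mpr ha
  set c : ℝ := min (‖a‖ / 4) ((L - 1) / 4) with hc_def
  have hc : 0 < c := lt_min (by positivity) (by linarith)
  have hca : c ≤ ‖a‖ / 4 := min_le_left _ _
  have hcL : c ≤ (L - 1) / 4 := min_le_right _ _
  -- continuity of the derivative
  have hcont : ContinuousAt (fun z => q.derivative.eval z) z₀ :=
    (q.derivative.continuous_aeval).continuousAt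
  obtain ⟨δ₁, hδ₁pos, hδ₁⟩ := Metric.continuousAt_iff.mp hcont c hc
  set δ : ℝ := min (min (ε / 2) (δ₁ / 2)) ((1 - ‖z₀‖) / 2) with hδ_def
  have hδpos : 0 < δ := lt_min (lt_min (by linarith) (by linarith)) (by linarith)
  have hδε : δ ≤ ε / 2 := le_trans (min_le_left _ _) (min_le_left _ _)
  have hδ1 : δ ≤ δ₁ / 2 := le_trans (min_le_left _ _) (min_le_right _ _)
  have hδz : δ ≤ (1 - ‖z₀‖) / 2 := min_le_right _ _
  set r : ℝ := ‖z₀‖ + δ with hr_def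
  have hr0 : 0 < r := by positivity
  have hr1 : r < 1 := by
    have := norm_nonneg z₀; simp only [hr_def]; linarith
  have hqball : ∀ z ∈ Metric.closedBall z₀ δ,
      ‖q.derivative.eval z - q.derivative.eval z₀‖ ≤ c := by
    intro z hz
    have hz' : dist z z₀ < δ₁ := lt_of_le_of_lt (mem_closedBall.mp hz) (by linarith)
    have := hδ₁ hz'
    rw [dist_eq_norm] at this
    exact this.le
  have hnorm_le : ∀ z ∈ Metric.closedBall z₀ δ, ‖z‖ ≤ r := by
    intro z hz
    have hz' : ‖z - z₀‖ ≤ δ := by simpa [dist_eq_norm] using mem_closedBall.mp hz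
    calc ‖z‖ = ‖z - z₀ + z₀‖ := by ring_nf
      _ ≤ ‖z - z₀‖ + ‖z₀‖ := norm_add_le _ _
      _ ≤ δ + ‖z₀‖ := by linarith
      _ = r := by rw [hr_def]; ring
  -- limits
  have habs : |r| < 1 := by rw [abs_of_pos hr0]; exact hr1
  have h1 : Tendsto (fun n : ℕ => (n : ℝ) * r ^ n / r) atTop (nhds 0) := by
    have := (tendsto_pow_const_mul_const_pow_of_abs_lt_one 1 habs).div_const r
    simpa using this
  have h2 : Tendsto (fun n : ℕ => r ^ n) atTop (nhds 0) :=
    tendsto_pow_atTop_nhds_zero_of_lt_one hr0.le hr1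
  have hev1 : ∀ᶠ n : ℕ in atTop, (n : ℝ) * r ^ n / r ≤ c :=
    (h1.eventually_le_const hc)
  have hev2 : ∀ᶠ n : ℕ in atTop, r ^ n ≤ δ / 2 * ‖a‖ :=
    (h2.eventually_le_const (by positivity))
  obtain ⟨N, hN⟩ := ((hev1.and hev2).and (eventually_ge_atTop 1)).exists_forall_of_atTop
  refine ⟨N, fun n hn => ?_⟩
  obtain ⟨⟨hn1, hn2⟩, hn3⟩ := hN n hn
  -- rewrite hn1 : n * r^(n-1) ≤ c
  have hn1' : (n : ℝ) * r ^ (n - 1) ≤ c := by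
    have : (n : ℝ) * r ^ n / r = (n : ℝ) * r ^ (n - 1) := by
      rw [mul_div_assoc]
      congr 1
      rw [eq_comm, eq_div_iff hr0.ne', ← pow_succ]
      congr 1
      omega
    rwa [this] at hn1
  -- the contraction map
  set S : Set ℂ := Metric.closedBall z₀ δ with hS_def
  set Φ : ℂ → ℂ := fun z => z - (z ^ n + q.eval z - z) / a with hΦ_def
  have hderiv : ∀ z : ℂ, HasDerivAt Φ
      ((q.derivative.eval z₀ - q.derivative.eval z - (n : ℂ) * z ^ (n - 1)) / a) z := by
    intro z
    have h1 : HasDerivAt (fun z : ℂ => z ^ n + q.eval z - z)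
        ((n : ℂ) * z ^ (n - 1) + q.derivative.eval z - 1) z :=
      ((hasDerivAt_pow n z).add (q.hasDerivAt z)).sub (hasDerivAt_id z)
    have h2 : HasDerivAt Φ (1 - ((n : ℂ) * z ^ (n - 1) + q.derivative.eval z - 1) / a) z :=
      (hasDerivAt_id z).sub (h1.div_const a)
    convert h2 using 1
    field_simp [ha_def]
    ring
  have hbound : ∀ z ∈ S, ‖(q.derivative.eval z₀ - q.derivative.eval z
      - (n : ℂ) * z ^ (n - 1)) / a‖ ≤ 1 / 2 := by
    intro z hz
    have hzr : ‖z‖ ≤ r := hnorm_le z hz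
    have hpow : ‖(n : ℂ) * z ^ (n - 1)‖ ≤ (n : ℝ) * r ^ (n - 1) := by
      rw [norm_mul, norm_pow]
      have : ‖(n : ℂ)‖ = (n : ℝ) := by simp
      rw [this]
      exact mul_le_mul_of_nonneg_left (pow_le_pow_left₀ (norm_nonneg z) hzr _) (Nat.cast_nonneg n)
    have hq' : ‖q.derivative.eval z₀ - q.derivative.eval z‖ ≤ c := by
      rw [← norm_neg]; simpa using hqball z hz
    rw [norm_div]
    rw [div_le_iff₀ hanorm]
    calc ‖q.derivative.eval z₀ - q.derivative.eval z - (n : ℂ) * z ^ (n - 1)‖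
        ≤ ‖q.derivative.eval z₀ - q.derivative.eval z‖ + ‖(n : ℂ) * z ^ (n - 1)‖ :=
          norm_sub_le _ _
      _ ≤ c + c := add_le_add hq' (le_trans hpow hn1')
      _ ≤ ‖a‖ / 4 + ‖a‖ / 4 := add_le_add hca hca
      _ = 1 / 2 * ‖a‖ := by ring
  have hlip : ∀ x ∈ S, ∀ y ∈ S, ‖Φ y - Φ x‖ ≤ 1 / 2 * ‖y - x‖ := by
    intro x hx y hy
    have := (convex_closedBall z₀ δ).norm_image_sub_le_of_norm_hasDerivWithin_le
      (fun z hz => (hderiv z).hasDerivWithinAt) (fun z hz => hbound z hz) hx hy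
    simpa using this
  have hΦz₀ : ‖Φ z₀ - z₀‖ ≤ δ / 2 := by
    have : Φ z₀ - z₀ = -(z₀ ^ n / a) := by
      simp only [hΦ_def, hfix]
      ring
    rw [this, norm_neg, norm_div, norm_pow]
    rw [div_le_iff₀ hanorm]
    calc ‖z₀‖ ^ n ≤ r ^ n := pow_le_pow_left₀ (norm_nonneg z₀) (by simp [hr_def]; linarith) n
      _ ≤ δ / 2 * ‖a‖ := hn2
  have hmaps : Set.MapsTo Φ S S := by
    intro z hz
    rw [hS_def, mem_closedBall, dist_eq_norm]
    have hz' : ‖z - z₀‖ ≤ δ := by simpa [dist_eq_norm] using mem_closedBall.mp hz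
    calc ‖Φ z - z₀‖ ≤ ‖Φ z - Φ z₀‖ + ‖Φ z₀ - z₀‖ := by
          have := norm_add_le (Φ z - Φ z₀) (Φ z₀ - z₀); simpa using this
      _ ≤ 1 / 2 * ‖z - z₀‖ + δ / 2 := add_le_add (hlip z₀ (mem_closedBall_self hδpos.le) z hz) hΦz₀
      _ ≤ 1 / 2 * δ + δ / 2 := by nlinarith
      _ = δ := by ring
  have hcontr : ContractingWith (1/2 : NNReal) (hmaps.restrict Φ S S) := by
    constructor
    · rw [← NNReal.coe_lt_coe]; norm_num
    · apply LipschitzWith.of_dist_le_mul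
      rintro ⟨x, hx⟩ ⟨y, hy⟩
      have := hlip y hy x hx
      simp only [Set.MapsTo.restrict, Subtype.dist_eq, dist_eq_norm]
      simpa [Subtype.map] using this
  obtain ⟨zn, hznS, hznfix, -⟩ := hcontr.exists_fixedPoint'
    (isClosed_closedBall.isComplete) hmaps (mem_closedBall_self hδpos.le)
    (edist_ne_top _ _)
  have heq : zn ^ n + q.eval zn = zn := by
    have h : zn - (zn ^ n + q.eval zn - zn) / a = zn := hznfix
    have h2 : (zn ^ n + q.eval zn - zn) / a = 0 := sub_eq_self.mp h
    have h3 := (div_eq_zero_iff.mp h2).resolve_right ha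
    have h4 := sub_eq_zero.mp h3
    exact h4
  refine ⟨zn, heq, ?_, ?_⟩
  · have hz' : ‖zn - z₀‖ ≤ δ := by simpa [dist_eq_norm] using mem_closedBall.mp hznS
    linarith
  · have hzr : ‖zn‖ ≤ r := hnorm_le zn hznS
    have hpow : ‖(n : ℂ) * zn ^ (n - 1)‖ ≤ c := by
      calc ‖(n : ℂ) * zn ^ (n - 1)‖ ≤ (n : ℝ) * r ^ (n - 1) := by
            rw [norm_mul, norm_pow]
            have : ‖(n : ℂ)‖ = (n : ℝ) := by simp
            rw [this]
            exact mul_le_mul_of_nonneg_left (pow_le_pow_left₀ (norm_nonneg zn) hzr _)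
              (Nat.cast_nonneg n)
        _ ≤ c := hn1'
    have hq' : ‖q.derivative.eval zn - q.derivative.eval z₀‖ ≤ c := hqball zn hznS
    have key : L ≤ ‖(n : ℂ) * zn ^ (n - 1) + q.derivative.eval zn‖ + 2 * c := by
      have hde : q.derivative.eval z₀ = ((n : ℂ) * zn ^ (n - 1) + q.derivative.eval zn)
          + ((q.derivative.eval z₀ - q.derivative.eval zn) - (n : ℂ) * zn ^ (n - 1)) := by ring
      calc L = ‖q.derivative.eval z₀‖ := rfl
        _ ≤ ‖(n : ℂ) * zn ^ (n - 1) + q.derivative.eval zn‖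
            + ‖(q.derivative.eval z₀ - q.derivative.eval zn) - (n : ℂ) * zn ^ (n - 1)‖ := by
              conv_lhs => rw [hde]
              exact norm_add_le _ _
        _ ≤ ‖(n : ℂ) * zn ^ (n - 1) + q.derivative.eval zn‖
            + (‖q.derivative.eval z₀ - q.derivative.eval zn‖ + ‖(n : ℂ) * zn ^ (n - 1)‖) := by
              gcongr; exact norm_sub_le _ _
        _ ≤ _ := by
              have : ‖q.derivative.eval z₀ - q.derivative.eval zn‖ ≤ c := by
                rw [← norm_neg]; simpa using hq'
              linarith
    linarith
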